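/- As δ → 0⁺, φ(δ) is asymptotic to δ^{-1}/log(1/δ), i.e. the ratio φ(δ) / (δ^{-1}/log(1/δ)) tends to 1 as δ → 0⁺. -/

import Mathlib

open Finset Filter Real

/-- `ell k` is the product of the first `k` primes, `ℓ_k = p_1 ⋯ p_k`. -/
noncomputable def ell (k : ℕ) : ℕ := ∏ i ∈ Finset.range k, Nat.nth Nat.Prime i

/-- `phi δ = ∑_{k=1}^∞ ℓ_k^{-δ}`. -/
noncomputable def phi (δ : ℝ) : ℝ := ∑' k : ℕ, (ell (k + 1) : ℝ) ^ (-δ)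

lemma centralBinom_dvd_fac (n : ℕ) : Nat.centralBinom n ∣ Nat.factorial (2 * n) := by
  have h := Nat.choose_mul_factorial_mul_factorial (Nat.le_mul_of_pos_left n two_pos)
  rw [show 2 * n - n = n by omega] at h
  exact ⟨Nat.factorial n * Nat.factorial n, by rw [Nat.centralBinom, ← h]; ring⟩

lemma centralBinom_le (n : ℕ) (hn : 0 < n) :
    Nat.centralBinom n ≤ (2 * n) ^ (Nat.count Nat.Prime (2 * n + 1)) := by
  set c := Nat.centralBinom n with hc
  have hc0 : c ≠ 0 := (Nat.centralBinom_pos n).ne'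
  have hfac : c.factorization.prod (· ^ ·) = c := Nat.factorization_prod_pow_eq_self hc0
  have hsub : c.primeFactors ⊆ (Finset.range (2 * n + 1)).filter Nat.Prime := by
    intro q hq
    obtain ⟨hq1, hq2, _⟩ := Nat.mem_primeFactors.mp hq
    have hdvd : q ∣ Nat.factorial (2 * n) := hq2.trans (centralBinom_dvd_fac n)
    have hle : q ≤ 2 * n := (Nat.Prime.dvd_factorial hq1).mp hdvd
    exact Finset.mem_filter.mpr ⟨Finset.mem_range.mpr (Nat.lt_succ_of_le hle), hq1⟩
  have hcard : c.primeFactors.card ≤ Nat.count Nat.Prime (2 * n + 1) := by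
    rw [Nat.count_eq_card_filter_range]
    exact Finset.card_le_card hsub
  calc c = c.factorization.prod (· ^ ·) := hfac.symm
    _ ≤ ∏ _p ∈ c.factorization.support, (2 * n) := by
        refine Finset.prod_le_prod' ?_
        intro p hp
        exact Nat.pow_factorization_choose_le (by positivity)
    _ = (2 * n) ^ c.factorization.support.card := by rw [Finset.prod_const]
    _ ≤ (2 * n) ^ (Nat.count Nat.Prime (2 * n + 1)) := by
        apply Nat.pow_le_pow_right (by omega)
        simpa [Nat.support_factorization] using hcard

lemma nth_prime_ge (k : ℕ) : k + 2 ≤ Nat.nth Nat.Prime k := by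
  induction k with
  | zero => simp [Nat.nth_prime_zero_eq_two]
  | succ n ih =>
      have h : Nat.nth Nat.Prime n < Nat.nth Nat.Prime (n + 1) :=
        (Nat.nth_lt_nth Nat.infinite_setOf_prime).mpr (Nat.lt_succ_self n)
      omega

lemma count_prime_nth_succ (k : ℕ) :
    Nat.count Nat.Prime (Nat.nth Nat.Prime k + 1) = k + 1 :=
  Nat.count_nth_succ_of_infinite Nat.infinite_setOf_prime k

-- key Chebyshev-type bound
lemma nth_prime_log_bound (k : ℕ) (hk : 5 ≤ k) :
    (Nat.nth Nat.Prime k : ℝ) * Real.log 2 ≤ (k + 3) * Real.log (Nat.nth Nat.Prime k + 1) := by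
  set p := Nat.nth Nat.Prime k with hp
  have hpp : p.Prime := Nat.prime_nth_prime k
  have hp7 : 7 ≤ p := le_trans (by omega) (nth_prime_ge k)
  have hodd : Odd p := hpp.odd_of_ne_two (by omega)
  obtain ⟨m, hm⟩ := hodd
  set n := m + 1 with hn
  have h2n : 2 * n = p + 1 := by omega
  have hn4 : 4 ≤ n := by omega
  -- 4 ^ n < n * centralBinom n
  have h1 : 4 ^ n < n * Nat.centralBinom n := Nat.four_pow_lt_mul_centralBinom n hn4
  have h2 : Nat.centralBinom n ≤ (2 * n) ^ (Nat.count Nat.Prime (2 * n + 1)) :=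
    centralBinom_le n (by omega)
  have hcount : Nat.count Nat.Prime (2 * n + 1) ≤ k + 2 := by
    rw [h2n]
    have := count_prime_nth_succ k
    rw [← hp] at this
    rw [Nat.count_succ]
    split <;> omega
  have h3 : (4:ℕ) ^ n ≤ (p + 1) ^ (k + 3) := by
    calc (4:ℕ) ^ n ≤ n * Nat.centralBinom n := h1.le
      _ ≤ n * (2 * n) ^ (Nat.count Nat.Prime (2 * n + 1)) := Nat.mul_le_mul_left n h2
      _ ≤ (2 * n) * (2 * n) ^ (k + 2) := by
          apply Nat.mul_le_mul (by omega)
          exact Nat.pow_le_pow_right (by omega) hcount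
      _ = (2 * n) ^ (k + 3) := by ring
      _ = (p + 1) ^ (k + 3) := by rw [h2n]
  -- take real logs
  have h4 : ((4:ℕ):ℝ) ^ n ≤ ((p + 1 : ℕ):ℝ) ^ (k + 3) := by
    exact_mod_cast Nat.cast_le.mpr h3
  have h5 : Real.log ((4:ℝ) ^ n) ≤ Real.log (((p:ℝ) + 1) ^ (k + 3)) := by
    apply Real.log_le_log (by positivity)
    push_cast at h4 ⊢
    exact h4
  rw [Real.log_pow, Real.log_pow] at h5
  have hlog4 : Real.log 4 = 2 * Real.log 2 := by
    rw [show (4:ℝ) = 2 ^ 2 by norm_num, Real.log_pow]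
    push_cast; ring
  have h6 : (n:ℝ) * (2 * Real.log 2) ≤ (k + 3) * Real.log ((p:ℝ) + 1) := by
    calc (n:ℝ) * (2 * Real.log 2) = (n:ℝ) * Real.log 4 := by rw [hlog4]
      _ ≤ (k + 3) * Real.log ((p:ℝ) + 1) := by exact_mod_cast h5
  have h7 : (p:ℝ) ≤ 2 * n := by exact_mod_cast (by omega : p ≤ 2 * n)
  calc (p:ℝ) * Real.log 2 ≤ (2 * n) * Real.log 2 := by
        apply mul_le_mul_of_nonneg_right h7 (Real.log_nonneg (by norm_num))
    _ = (n:ℝ) * (2 * Real.log 2) := by ring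
    _ ≤ (k + 3) * Real.log ((p:ℝ) + 1) := h6

lemma nth_prime_le_sq (k : ℕ) (hk : 5 ≤ k) :
    (Nat.nth Nat.Prime k : ℝ) ≤ 17 * (k + 3) ^ 2 := by
  set P : ℝ := (Nat.nth Nat.Prime k : ℝ) with hP
  have hP1 : 1 ≤ P := by
    rw [hP]; exact_mod_cast Nat.one_le_iff_ne_zero.mpr (Nat.prime_nth_prime k).pos.ne'
  have h1 := nth_prime_log_bound k hk
  have hlog2 : (0.6931471803 : ℝ) < Real.log 2 := Real.log_two_gt_d9
  -- log (P+1) ≤ 2 * sqrt (P+1)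
  have h2 : Real.log (P + 1) ≤ 2 * Real.sqrt (P + 1) := by
    have hs : Real.log (P + 1) = 2 * Real.log (Real.sqrt (P + 1)) := by
      rw [Real.log_sqrt (by linarith)]; ring
    rw [hs]
    have := Real.log_le_sub_one_of_pos (show (0:ℝ) < Real.sqrt (P+1) by positivity)
    nlinarith [Real.sqrt_nonneg (P+1)]
  have h3 : Real.sqrt (P + 1) ≤ Real.sqrt 2 * Real.sqrt P := by
    rw [← Real.sqrt_mul (by norm_num)]
    apply Real.sqrt_le_sqrt; linarith
  have hq : Real.sqrt P ^ 2 = P := Real.sq_sqrt (by linarith)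
  have hk3 : (0:ℝ) < (k:ℝ) + 3 := by positivity
  -- P * log 2 ≤ (k+3) * 2 * √2 * √P  ⟹  √P ≤ 2√2(k+3)/log2
  have h4 : P * Real.log 2 ≤ (k + 3) * (2 * Real.sqrt 2 * Real.sqrt P) := by
    calc P * Real.log 2 ≤ (k + 3) * Real.log (P + 1) := h1
      _ ≤ (k + 3) * (2 * Real.sqrt (P + 1)) := by
          apply mul_le_mul_of_nonneg_left (by linarith) hk3.le
      _ ≤ (k + 3) * (2 * Real.sqrt 2 * Real.sqrt P) := by
          apply mul_le_mul_of_nonneg_left ?_ hk3.le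
          nlinarith [Real.sqrt_nonneg 2, Real.sqrt_nonneg P]
  have hsqrt2 : Real.sqrt 2 ≤ 1.415 := by
    rw [show (1.415:ℝ) = Real.sqrt (1.415^2) by rw [Real.sqrt_sq]; norm_num]
    apply Real.sqrt_le_sqrt; norm_num
  have hsP : (0:ℝ) < Real.sqrt P := by positivity
  have h4' : (Real.sqrt P * Real.log 2) * Real.sqrt P ≤ ((↑k+3) * (2*Real.sqrt 2)) * Real.sqrt P := by
    nlinarith [hq, h4]
  have h5 : Real.sqrt P * Real.log 2 ≤ (↑k+3) * (2*Real.sqrt 2) := le_of_mul_le_mul_right h4' hsP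
  have h7 : Real.sqrt P ≤ 4.084 * (↑k+3) := by nlinarith
  calc P = Real.sqrt P ^ 2 := hq.symm
    _ ≤ (4.084 * (↑k+3)) ^ 2 := by nlinarith
    _ ≤ 17 * (↑k + 3) ^ 2 := by nlinarith

lemma log18 : Real.log 18 ≤ 3 := by
  rw [← Real.exp_le_exp, Real.exp_log (by norm_num)]
  have h := Real.exp_one_gt_d9
  calc (18:ℝ) ≤ 2.7182818283 ^ (3:ℕ) := by norm_num
    _ ≤ Real.exp 1 ^ (3:ℕ) := by gcongr <;> norm_num
    _ = Real.exp 3 := by rw [← Real.exp_nat_mul]; norm_num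

lemma nth_prime_le_klogk (k : ℕ) (hk : 5 ≤ k) :
    (Nat.nth Nat.Prime k : ℝ) ≤ 16 * k * Real.log k + 48 * k := by
  set P : ℝ := (Nat.nth Nat.Prime k : ℝ) with hP
  have h1 := nth_prime_log_bound k hk
  have h2 := nth_prime_le_sq k hk
  have hlog2 : (0.6931471803 : ℝ) < Real.log 2 := Real.log_two_gt_d9
  have hk1 : (1:ℝ) ≤ (k:ℝ) := by exact_mod_cast by omega
  have hkk : (k:ℝ) + 3 ≤ 4 * k := by linarith
  have hlogk : (0:ℝ) ≤ Real.log k := Real.log_nonneg hk1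
  -- log(P+1) ≤ log(18 (k+3)^2) = log 18 + 2 log (k+3) ≤ 3 + 2 log (4k)
  have h3 : Real.log (P + 1) ≤ 3 + 2 * Real.log (4 * k) := by
    have e1 : P + 1 ≤ 18 * (4*(k:ℝ)) ^ 2 := by nlinarith
    have e2 : Real.log (P + 1) ≤ Real.log (18 * (4*(k:ℝ)) ^ 2) := by
      apply Real.log_le_log (by positivity) e1
    rw [Real.log_mul (by norm_num) (by positivity), Real.log_pow] at e2
    push_cast at e2
    linarith [log18]
  have h4 : Real.log (4 * (k:ℝ)) = Real.log 4 + Real.log k := Real.log_mul (by norm_num) (by positivity)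
  have hlog4 : Real.log 4 ≤ 1.4 := by
    rw [show (4:ℝ) = 2^(2:ℕ) by norm_num, Real.log_pow]
    push_cast
    have := Real.log_two_lt_d9
    linarith
  -- P log 2 ≤ (k+3)(3 + 2 log 4 + 2 log k) ≤ 4k (5.8 + 2 log k) = 8 k log k + 23.2 k
  have h5 : P * Real.log 2 ≤ 4*(k:ℝ) * (5.8 + 2 * Real.log k) := by
    calc P * Real.log 2 ≤ ((k:ℝ) + 3) * Real.log (P + 1) := h1
      _ ≤ ((k:ℝ) + 3) * (3 + 2 * Real.log (4 * k)) := by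
          apply mul_le_mul_of_nonneg_left h3 (by positivity)
      _ ≤ (4*(k:ℝ)) * (3 + 2 * (1.4 + Real.log k)) := by
          apply mul_le_mul hkk (by rw [h4] at *; linarith) (by rw [h4]; positivity) (by positivity)
      _ = 4*(k:ℝ) * (5.8 + 2 * Real.log k) := by ring
  -- divide by log 2 ≥ 0.69: P ≤ (8/0.69) k log k + (23.2/0.69) k ≤ 16 k log k + 48 k... 8/.693=11.5, 23.2/.693=33.5 ✓
  nlinarith [hlogk, hk1]

lemma ev_log_nth_prime {ε : ℝ} (hε : 0 < ε) :
    ∀ᶠ k : ℕ in atTop, Real.log (Nat.nth Nat.Prime k) ≤ (1 + ε) * Real.log k := by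
  have hlit : ∀ᶠ x : ℝ in atTop, ‖Real.log x‖ ≤ 1/32 * ‖x ^ ε‖ :=
    (isLittleO_log_rpow_atTop hε).bound (by norm_num)
  have h48 : ∀ᶠ x : ℝ in atTop, 96 ≤ x ^ ε :=
    (tendsto_rpow_atTop hε).eventually_ge_atTop 96
  have hx1 : ∀ᶠ x : ℝ in atTop, 1 ≤ x := eventually_ge_atTop 1
  have hE : ∀ᶠ x : ℝ in atTop, 16 * Real.log x + 48 ≤ x ^ ε := by
    filter_upwards [hlit, h48, hx1] with x h1 h2 h3
    have hxε : (0:ℝ) ≤ x ^ ε := Real.rpow_nonneg (by linarith) ε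
    rw [Real.norm_eq_abs, Real.norm_eq_abs, abs_of_nonneg hxε] at h1
    have := le_abs_self (Real.log x)
    linarith
  have hEnat : ∀ᶠ k : ℕ in atTop, 16 * Real.log k + 48 ≤ (k:ℝ) ^ ε :=
    tendsto_natCast_atTop_atTop.eventually hE
  filter_upwards [hEnat, eventually_ge_atTop 5] with k h1 h5
  have hk0 : (0:ℝ) < (k:ℝ) := by exact_mod_cast by omega
  have hP : (Nat.nth Nat.Prime k : ℝ) ≤ (k:ℝ) ^ ((1:ℝ) + ε) := by
    calc (Nat.nth Nat.Prime k : ℝ) ≤ 16 * k * Real.log k + 48 * k := nth_prime_le_klogk k h5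
      _ = (k:ℝ) * (16 * Real.log k + 48) := by ring
      _ ≤ (k:ℝ) * (k:ℝ) ^ ε := by exact mul_le_mul_of_nonneg_left h1 hk0.le
      _ = (k:ℝ) ^ ((1:ℝ) + ε) := by rw [Real.rpow_add hk0, Real.rpow_one]
  have hP0 : (0:ℝ) < (Nat.nth Nat.Prime k : ℝ) := by
    exact_mod_cast (Nat.prime_nth_prime k).pos
  calc Real.log (Nat.nth Nat.Prime k) ≤ Real.log ((k:ℝ) ^ ((1:ℝ) + ε)) :=
        Real.log_le_log hP0 hP
    _ = (1 + ε) * Real.log k := Real.log_rpow hk0 _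

lemma ell_pos (k : ℕ) : 0 < ell k :=
  Finset.prod_pos fun i _ => (Nat.prime_nth_prime i).pos

lemma two_pow_le_ell (k : ℕ) : 2 ^ k ≤ ell k := by
  rw [ell]
  calc 2^k = ∏ _i ∈ Finset.range k, 2 := by rw [Finset.prod_const, Finset.card_range]
    _ ≤ ∏ i ∈ Finset.range k, Nat.nth Nat.Prime i :=
        Finset.prod_le_prod' fun i _ => (Nat.prime_nth_prime i).two_le

lemma log_ell_eq (m : ℕ) :
    Real.log (ell m) = ∑ i ∈ Finset.range m, Real.log (Nat.nth Nat.Prime i) := by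
  rw [ell, Nat.cast_prod, Real.log_prod]
  intro i _
  exact_mod_cast (Nat.prime_nth_prime i).pos.ne'

lemma log_factorial_ge (n : ℕ) : (n:ℝ) * Real.log n - n ≤ Real.log (Nat.factorial n) := by
  induction n with
  | zero => simp
  | succ n ih =>
      have hfac : Real.log (Nat.factorial (n+1)) =
          Real.log (n+1) + Real.log (Nat.factorial n) := by
        rw [Nat.factorial_succ, Nat.cast_mul, Real.log_mul (by positivity)
          (by exact_mod_cast (Nat.factorial_pos n).ne')]
        push_cast; ring
      rcases Nat.eq_zero_or_pos n with h0 | hn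
      · subst h0; simp [hfac]
      · have hn1 : (1:ℝ) ≤ (n:ℝ) := by exact_mod_cast hn
        have hkey : (n:ℝ) * (Real.log (n+1) - Real.log n) ≤ 1 := by
          have h1 : Real.log ((n+1)/(n:ℝ)) ≤ (n+1)/(n:ℝ) - 1 :=
            Real.log_le_sub_one_of_pos (by positivity)
          rw [Real.log_div (by positivity) (by positivity)] at h1
          have h2 : ((n:ℝ)+1)/(n:ℝ) - 1 = 1/(n:ℝ) := by field_simp; ring
          rw [h2] at h1
          calc (n:ℝ) * (Real.log (n+1) - Real.log n) ≤ (n:ℝ) * (1/(n:ℝ)) := by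
                apply mul_le_mul_of_nonneg_left _ (by positivity)
                exact_mod_cast h1
            _ = 1 := by field_simp
        rw [hfac]
        push_cast
        push_cast at ih
        nlinarith [hkey]

lemma ev_log_ell_lower {ε : ℝ} (hε : 0 < ε) :
    ∀ᶠ k : ℕ in atTop, (1 - ε) * (k * Real.log k) ≤ Real.log (ell (k + 1)) := by
  have hlogk : Tendsto (fun k : ℕ => Real.log k) atTop atTop :=
    Real.tendsto_log_atTop.comp tendsto_natCast_atTop_atTop
  filter_upwards [hlogk.eventually_ge_atTop (2/ε), eventually_ge_atTop 1] with k hlk hk1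
  have hk1' : (1:ℝ) ≤ (k:ℝ) := by exact_mod_cast hk1
  have hlogk0 : (0:ℝ) ≤ Real.log k := Real.log_nonneg hk1'
  -- log ell (k+1) ≥ log ((k+1)!)
  have h1 : Real.log ((Nat.factorial (k+1) : ℕ)) ≤ Real.log (ell (k+1)) := by
    rw [log_ell_eq]
    have : Real.log ((Nat.factorial (k+1) : ℕ)) =
        ∑ i ∈ Finset.range (k+1), Real.log ((i:ℝ) + 1) := by
      rw [← Finset.prod_range_add_one_eq_factorial, Nat.cast_prod, Real.log_prod]
      · push_cast; rfl
      · intro i _; positivity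
    rw [this]
    apply Finset.sum_le_sum
    intro i _
    apply Real.log_le_log (by positivity)
    have h := nth_prime_ge i
    exact_mod_cast by omega
  have h2 := log_factorial_ge (k+1)
  -- (k+1) log(k+1) - (k+1) ≥ k log k - (k+1)
  have h3 : (k:ℝ) * Real.log k ≤ ((k:ℝ)+1) * Real.log ((k:ℝ)+1) := by
    apply mul_le_mul (by linarith) (Real.log_le_log (by positivity) (by linarith)) hlogk0 (by linarith)
  have h4 : (k:ℝ) + 1 ≤ ε * (k * Real.log k) := by
    have : (2:ℝ) ≤ ε * Real.log k := by
      rw [div_le_iff₀ hε] at hlk; linarith [mul_comm ε (Real.log k)]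
    nlinarith
  push_cast at h2
  linarith

lemma tendsto_klogk : Tendsto (fun k : ℕ => (k:ℝ) * Real.log k) atTop atTop :=
  tendsto_natCast_atTop_atTop.atTop_mul_atTop₀
    (Real.tendsto_log_atTop.comp tendsto_natCast_atTop_atTop)

lemma ev_log_ell_upper {ε : ℝ} (hε : 0 < ε) :
    ∀ᶠ k : ℕ in atTop, Real.log (ell (k + 1)) ≤ (1 + ε) * (k * Real.log k) := by
  obtain ⟨N0, hN0⟩ := eventually_atTop.mp (ev_log_nth_prime (half_pos hε))
  set N := max N0 1 with hN
  set C := ∑ i ∈ Finset.range N, Real.log (Nat.nth Nat.Prime i) with hC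
  filter_upwards [eventually_ge_atTop N, tendsto_klogk.eventually_ge_atTop (2 * C / ε)]
    with k hkN hklog
  have hk1 : 1 ≤ k := le_trans (le_max_right N0 1) hkN
  have hk1' : (1:ℝ) ≤ (k:ℝ) := by exact_mod_cast hk1
  have hlogk0 : (0:ℝ) ≤ Real.log k := Real.log_nonneg hk1'
  have hklog0 : (0:ℝ) ≤ (k:ℝ) * Real.log k := by positivity
  have hCle : C ≤ ε / 2 * ((k:ℝ) * Real.log k) := by
    rw [div_le_iff₀ hε] at hklog
    nlinarith
  have hsplit : Real.log (ell (k+1)) = C + ∑ i ∈ Finset.Ico N (k+1), Real.log (Nat.nth Nat.Prime i) := by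
    rw [log_ell_eq, hC, Finset.range_eq_Ico, Finset.range_eq_Ico]
    exact (Finset.sum_Ico_consecutive (fun i => Real.log (Nat.nth Nat.Prime i)) (Nat.zero_le N) (show N ≤ k+1 by omega)).symm
  have hbound : ∑ i ∈ Finset.Ico N (k+1), Real.log (Nat.nth Nat.Prime i)
      ≤ ((k+1-N:ℕ):ℝ) * ((1 + ε/2) * Real.log k) := by
    have hsle := Finset.sum_le_card_nsmul (Finset.Ico N (k+1))
      (fun i => Real.log (Nat.nth Nat.Prime i)) ((1 + ε/2) * Real.log k) ?_
    · rwa [Nat.card_Ico, nsmul_eq_mul] at hsle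
    · intro i hi
      obtain ⟨hi1, hi2⟩ := Finset.mem_Ico.mp hi
      calc Real.log (Nat.nth Nat.Prime i) ≤ (1 + ε/2) * Real.log i :=
            hN0 i (le_trans (le_max_left N0 1) hi1)
        _ ≤ (1 + ε/2) * Real.log k := by
            apply mul_le_mul_of_nonneg_left _ (by linarith)
            apply Real.log_le_log
            · have : 1 ≤ i := le_trans (le_max_right N0 1) hi1
              exact_mod_cast this
            · exact_mod_cast by omega
  have hcard : ((k+1-N : ℕ):ℝ) ≤ (k:ℝ) := by
    have : k + 1 - N ≤ k := by omega
    exact_mod_cast this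
  have h2 : ((k+1-N:ℕ):ℝ) * ((1 + ε/2) * Real.log k) ≤ (k:ℝ) * ((1 + ε/2) * Real.log k) := by
    apply mul_le_mul_of_nonneg_right hcard (by positivity)
  rw [hsplit]
  calc C + ∑ i ∈ Finset.Ico N (k+1), Real.log (Nat.nth Nat.Prime i)
      ≤ ε/2 * ((k:ℝ) * Real.log k) + (k:ℝ) * ((1 + ε/2) * Real.log k) := by
        exact add_le_add hCle (le_trans hbound h2)
    _ = (1 + ε) * (k * Real.log k) := by ring

lemma term_eq {δ : ℝ} (k : ℕ) :
    (ell (k + 1) : ℝ) ^ (-δ) = Real.exp (-(δ * Real.log (ell (k + 1)))) := by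
  rw [Real.rpow_def_of_pos (by exact_mod_cast ell_pos (k+1))]
  ring_nf

lemma term_nonneg {δ : ℝ} (k : ℕ) : 0 ≤ (ell (k + 1) : ℝ) ^ (-δ) :=
  Real.rpow_nonneg (by positivity) _

lemma term_le_one {δ : ℝ} (hδ : 0 < δ) (k : ℕ) : (ell (k + 1) : ℝ) ^ (-δ) ≤ 1 :=
  Real.rpow_le_one_of_one_le_of_nonpos
    (by exact_mod_cast (ell_pos (k+1))) (by linarith)

lemma summable_term {δ : ℝ} (hδ : 0 < δ) :
    Summable (fun k : ℕ => (ell (k + 1) : ℝ) ^ (-δ)) := by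
  have hr0 : (0:ℝ) ≤ (2:ℝ) ^ (-δ) := Real.rpow_nonneg (by norm_num) _
  have hr1 : (2:ℝ) ^ (-δ) < 1 :=
    Real.rpow_lt_one_of_one_lt_of_neg (by norm_num) (by linarith)
  have hgeo : Summable (fun k : ℕ => ((2:ℝ) ^ (-δ)) ^ (k+1)) := by
    have := (summable_geometric_of_lt_one hr0 hr1).mul_left ((2:ℝ) ^ (-δ))
    apply this.congr
    intro k
    rw [← pow_succ']
  apply Summable.of_nonneg_of_le (fun k => term_nonneg k) _ hgeo
  intro k
  have h1 : ((2:ℝ) ^ (k+1 : ℕ)) ≤ (ell (k+1) : ℝ) := by exact_mod_cast two_pow_le_ell (k+1)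
  have h2 : (ell (k+1) : ℝ) ^ (-δ) ≤ ((2:ℝ) ^ (k+1 : ℕ)) ^ (-δ) :=
    Real.rpow_le_rpow_of_nonpos (by positivity) h1 (by linarith)
  calc (ell (k+1) : ℝ) ^ (-δ) ≤ ((2:ℝ) ^ (k+1 : ℕ)) ^ (-δ) := h2
    _ = ((2:ℝ) ^ (-δ)) ^ (k+1) := by
        rw [← Real.rpow_natCast ((2:ℝ) ^ (-δ)) (k+1), ← Real.rpow_natCast (2:ℝ) (k+1),
          ← Real.rpow_mul (by norm_num), ← Real.rpow_mul (by norm_num), mul_comm]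

-- helper eventualities on 𝓝[>]0
lemma ev_pos : ∀ᶠ δ in nhdsWithin (0:ℝ) (Set.Ioi 0), 0 < δ := eventually_mem_nhdsWithin

lemma ev_lt {c : ℝ} (hc : 0 < c) : ∀ᶠ δ in nhdsWithin (0:ℝ) (Set.Ioi 0), δ < c :=
  (eventually_lt_nhds hc).filter_mono nhdsWithin_le_nhds

lemma tendsto_mul_log_inv :
    Tendsto (fun δ : ℝ => δ * Real.log δ⁻¹) (nhdsWithin 0 (Set.Ioi 0)) (nhds 0) := by
  have h := (tendsto_log_mul_rpow_nhdsGT_zero zero_lt_one).neg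
  rw [neg_zero] at h
  apply h.congr
  intro δ
  rw [Real.rpow_one, Real.log_inv]
  ring

lemma tendsto_inv_rpow {c : ℝ} (hc : 0 < c) :
    Tendsto (fun δ : ℝ => (δ⁻¹) ^ c) (nhdsWithin 0 (Set.Ioi 0)) atTop :=
  (tendsto_rpow_atTop hc).comp tendsto_inv_nhdsGT_zero

lemma tendsto_exp_neg_rpow {c : ℝ} (hc : 0 < c) :
    Tendsto (fun δ : ℝ => Real.exp (-(δ⁻¹) ^ c)) (nhdsWithin 0 (Set.Ioi 0)) (nhds 0) :=
  Real.tendsto_exp_atBot.comp ((tendsto_neg_atTop_atBot).comp (tendsto_inv_rpow hc))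

lemma tendsto_log_div_rpow {c : ℝ} (hc : 0 < c) :
    Tendsto (fun δ : ℝ => Real.log δ⁻¹ / (δ⁻¹) ^ c) (nhdsWithin 0 (Set.Ioi 0)) (nhds 0) :=
  ((isLittleO_log_rpow_atTop hc).tendsto_div_nhds_zero).comp tendsto_inv_nhdsGT_zero

set_option maxHeartbeats 2000000 in
lemma main_lower {ε : ℝ} (hε : 0 < ε) (hε2 : ε ≤ 1/2) :
    ∀ᶠ δ in nhdsWithin (0:ℝ) (Set.Ioi 0),
      1 - 3*ε ≤ phi δ * (δ * Real.log δ⁻¹) := by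
  obtain ⟨N0, hN0⟩ := eventually_atTop.mp ((ev_log_ell_lower hε).and (ev_log_ell_upper hε))
  set N := max N0 1 with hNdef
  have hN1 : 1 ≤ N := le_max_right _ _
  have hNprop : ∀ k, N ≤ k → Real.log (ell (k + 1)) ≤ (1+ε) * (k * Real.log k) :=
    fun k hk => (hN0 k (le_trans (le_max_left _ _) hk)).2
  have hN5 : (0:ℝ) < ε / (5 * N) := by positivity
  filter_upwards [ev_pos, ev_lt (Real.exp_pos (-1)),
    tendsto_mul_log_inv.eventually_lt_const hN5,
    (tendsto_inv_rpow (show (0:ℝ) < 1 + ε by linarith)).eventually_ge_atTop (N:ℝ),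
    (tendsto_exp_neg_rpow hε).eventually_lt_const (show (0:ℝ) < ε/2 by linarith)]
    with δ hδ hδe hδL5' hk2N' hexptail'
  obtain ⟨x, hxdef⟩ : ∃ x : ℝ, x = δ⁻¹ := ⟨_, rfl⟩
  have hx0 : 0 < x := by rw [hxdef]; positivity
  obtain ⟨L, hLdef⟩ : ∃ L : ℝ, L = Real.log δ⁻¹ := ⟨_, rfl⟩
  have hL1 : 1 ≤ L := by
    rw [hLdef, Real.log_inv]
    have : Real.log δ < Real.log (Real.exp (-1)) :=
      Real.log_lt_log hδ hδe
    rw [Real.log_exp] at this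
    linarith
  have hδL5 : δ * L < ε / (5 * (N:ℝ)) := by rw [hLdef]; exact hδL5'
  have hk2N : (N:ℝ) ≤ x ^ (1+ε) := by rw [hxdef]; exact hk2N'
  have hexptail : Real.exp (-x ^ ε) < ε/2 := by rw [hxdef]; exact hexptail'
  have hδL0 : 0 < δ * L := by
    have : 0 < L := by linarith
    positivity
  obtain ⟨θ, hθdef⟩ : ∃ θ : ℝ, θ = (1+ε)^2 * (δ * L) := ⟨_, rfl⟩
  have hθ0 : 0 < θ := by rw [hθdef]; positivity
  obtain ⟨s, hsdef⟩ : ∃ s : ℝ, s = Real.exp (-θ) := ⟨_, rfl⟩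
  have hs1 : s < 1 := by rw [hsdef]; exact Real.exp_lt_one_iff.mpr (by linarith)
  have hs0 : 0 < s := by rw [hsdef]; exact Real.exp_pos _
  obtain ⟨k2, hk2def⟩ : ∃ k2 : ℕ, k2 = Nat.floor (x ^ (1+ε)) := ⟨_, rfl⟩
  have hk2ge : (N:ℕ) ≤ k2 := by rw [hk2def]; exact Nat.le_floor hk2N
  have hk2le : (k2:ℝ) ≤ x ^ (1+ε) := by rw [hk2def]; exact Nat.floor_le (by positivity)
  have hk2succ : x ^ (1+ε) ≤ (k2:ℝ) + 1 := by
    rw [hk2def]; exact (Nat.lt_floor_add_one _).le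
  -- term bound on Ico N (k2+1)
  have hterm : ∀ k ∈ Finset.Ico N (k2+1), s ^ k ≤ (ell (k + 1) : ℝ) ^ (-δ) := by
    intro k hk
    obtain ⟨hk1, hk2'⟩ := Finset.mem_Ico.mp hk
    have hkk2 : k ≤ k2 := by omega
    have hk1' : (1:ℝ) ≤ (k:ℝ) := by exact_mod_cast le_trans hN1 hk1
    have hlogk0 : (0:ℝ) ≤ Real.log k := Real.log_nonneg hk1'
    have hlogk : Real.log k ≤ (1+ε) * L := by
      calc Real.log k ≤ Real.log (x ^ (1+ε)) :=
            Real.log_le_log (by linarith) (le_trans (by exact_mod_cast hkk2) hk2le)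
        _ = (1+ε) * L := by rw [Real.log_rpow hx0, hxdef, ← hLdef]
    have hLk := hNprop k hk1
    have hchain : δ * Real.log (ell (k + 1)) ≤ θ * k := by
      have h1 : Real.log (ell (k + 1)) ≤ (1+ε) * (k * ((1+ε) * L)) := by
        calc Real.log (ell (k + 1)) ≤ (1+ε) * (k * Real.log k) := hLk
          _ ≤ (1+ε) * (k * ((1+ε) * L)) := by
              apply mul_le_mul_of_nonneg_left _ (by linarith)
              exact mul_le_mul_of_nonneg_left hlogk (by positivity)
      calc δ * Real.log (ell (k + 1)) ≤ δ * ((1+ε) * (k * ((1+ε) * L))) :=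
            mul_le_mul_of_nonneg_left h1 hδ.le
        _ = θ * k := by rw [hθdef]; ring
    rw [term_eq, hsdef, ← Real.exp_nat_mul]
    apply Real.exp_le_exp.mpr
    nlinarith [hchain]
  -- geometric sum lower bound
  have hgeom : ∑ k ∈ Finset.Ico N (k2+1), s ^ k = (s ^ N - s ^ (k2+1)) / (1 - s) :=
    geom_sum_Ico' hs1.ne (by omega)
  have hsum_le : ∑ k ∈ Finset.Ico N (k2+1), s ^ k ≤ phi δ := by
    refine le_trans (Finset.sum_le_sum hterm) ?_
    exact Summable.sum_le_tsum _ (fun k _ => term_nonneg k) (summable_term hδ)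
  -- s^N ≥ 1 - ε/2
  have hθN : θ * N ≤ ε / 2 := by
    have hN0' : (1:ℝ) ≤ (N:ℝ) := by exact_mod_cast hN1
    have h2 : (1+ε)^2 ≤ 9/4 := by nlinarith
    have h3 : δ * L ≤ ε / (5*N) := hδL5.le
    calc θ * N = (1+ε)^2 * (δ*L) * N := by rw [hθdef]
      _ ≤ (9/4) * (ε/(5*N)) * N := by
          apply mul_le_mul_of_nonneg_right _ (by positivity)
          apply mul_le_mul h2 h3 hδL0.le (by norm_num)
      _ = (9/20) * ε := by field_simp; ring
      _ ≤ ε / 2 := by linarith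
  have hsN : 1 - ε/2 ≤ s ^ N := by
    rw [hsdef, ← Real.exp_nat_mul]
    have := Real.add_one_le_exp ((N:ℝ) * -θ)
    have : 1 - θ * N ≤ Real.exp ((N:ℝ) * -θ) := by
      have h := Real.add_one_le_exp ((N:ℝ) * -θ)
      calc 1 - θ * N = (N:ℝ) * -θ + 1 := by ring
        _ ≤ _ := h
    linarith
  -- s^(k2+1) ≤ ε/2
  have hstail : s ^ (k2+1) ≤ ε/2 := by
    have hθk : x ^ ε ≤ θ * (k2+1) := by
      have h1 : δ * x ^ (1+ε) = x ^ ε := by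
        rw [Real.rpow_add hx0, Real.rpow_one, hxdef]
        field_simp
      have h2 : δ * x ^ (1+ε) ≤ δ * ((k2:ℝ)+1) :=
        mul_le_mul_of_nonneg_left (by exact_mod_cast hk2succ) hδ.le
      have h3 : δ * ((k2:ℝ)+1) ≤ θ * ((k2:ℝ)+1) := by
        apply mul_le_mul_of_nonneg_right _ (by positivity)
        rw [hθdef]
        have h4 : (1:ℝ) ≤ (1+ε)^2 * L := by nlinarith
        nlinarith [mul_le_mul_of_nonneg_left h4 hδ.le]
      push_cast
      rw [← h1]
      exact le_trans h2 h3
    rw [hsdef, ← Real.exp_nat_mul]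
    calc Real.exp ((k2+1:ℕ) * -θ) ≤ Real.exp (-(x ^ ε)) := by
          apply Real.exp_le_exp.mpr
          push_cast
          linarith
      _ ≤ ε/2 := hexptail.le
  -- 1 - s ≤ θ and 0 < 1 - s
  have h1s : 1 - s ≤ θ := by
    have := Real.add_one_le_exp (-θ)
    rw [hsdef]; linarith
  have h1s0 : 0 < 1 - s := by linarith
  -- assemble
  have hphi : (1-ε)/θ ≤ phi δ := by
    have h1 : (1-ε)/θ ≤ (1-ε)/(1-s) := by
      apply div_le_div_of_nonneg_left (by linarith) h1s0 h1s  -- maybe wrong name/arg order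
    have h2 : (1-ε)/(1-s) ≤ (s ^ N - s ^ (k2+1))/(1-s) := by
      rw [div_le_div_iff₀ h1s0 h1s0]
      nlinarith
    calc (1-ε)/θ ≤ (1-ε)/(1-s) := h1
      _ ≤ (s ^ N - s ^ (k2+1))/(1-s) := h2
      _ = ∑ k ∈ Finset.Ico N (k2+1), s ^ k := hgeom.symm
      _ ≤ phi δ := hsum_le
  have hfinal : (1-ε)/θ * (δ * L) = (1-ε)/(1+ε)^2 := by
    rw [hθdef]
    field_simp
  have h5 : (1-ε)/(1+ε)^2 ≤ phi δ * (δ * L) := by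
    rw [← hfinal]
    exact mul_le_mul_of_nonneg_right hphi hδL0.le
  have h6 : 1 - 3*ε ≤ (1-ε)/(1+ε)^2 := by
    rw [le_div_iff₀ (show (0:ℝ) < (1+ε)^2 by positivity)]
    have expand : (1-3*ε)*(1+ε)^2 = 1 - ε - 5*ε^2 - 3*ε^3 := by ring
    linarith [expand, pow_pos hε 2, pow_pos hε 3]
  rw [← hLdef]
  linarith

set_option maxHeartbeats 1600000 in
lemma main_upper {ε : ℝ} (hε : 0 < ε) (hε2 : ε ≤ 1/2) :
    ∀ᶠ δ in nhdsWithin (0:ℝ) (Set.Ioi 0),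
      phi δ * (δ * Real.log δ⁻¹) ≤ 1 + 15*ε := by
  obtain ⟨N0, hN0⟩ := eventually_atTop.mp (ev_log_ell_lower hε)
  set N := max N0 1 with hNdef
  have hN1 : 1 ≤ N := le_max_right _ _
  have hNprop : ∀ k, N ≤ k → (1-ε) * (k * Real.log k) ≤ Real.log (ell (k + 1)) :=
    fun k hk => hN0 k (le_trans (le_max_left _ _) hk)
  have hε1 : 0 < 1 - ε := by linarith
  filter_upwards [ev_pos, ev_lt (Real.exp_pos (-1)),
    tendsto_mul_log_inv.eventually_lt_const (show (0:ℝ) < ε/2 by linarith),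
    (tendsto_inv_rpow (show (0:ℝ) < 1 - ε by linarith)).eventually_ge_atTop (N:ℝ),
    (tendsto_log_div_rpow hε).eventually_lt_const (show (0:ℝ) < ε/2 by linarith)]
    with δ hδ hδe hδL' hk0N' hlogdiv'
  obtain ⟨x, hxdef⟩ : ∃ x : ℝ, x = δ⁻¹ := ⟨_, rfl⟩
  have hx0 : 0 < x := by rw [hxdef]; positivity
  obtain ⟨L, hLdef⟩ : ∃ L : ℝ, L = Real.log δ⁻¹ := ⟨_, rfl⟩
  have hL1 : 1 ≤ L := by
    rw [hLdef, Real.log_inv]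
    have : Real.log δ < Real.log (Real.exp (-1)) := Real.log_lt_log hδ hδe
    rw [Real.log_exp] at this
    linarith
  have hδL : δ * L < ε/2 := by rw [hLdef]; exact hδL'
  have hk0N : (N:ℝ) ≤ x ^ (1-ε) := by rw [hxdef]; exact hk0N'
  have hlogdiv : L / x ^ ε < ε/2 := by rw [hLdef, hxdef]; exact hlogdiv'
  have hδL0 : 0 < δ * L := by
    have : (0:ℝ) < L := by linarith
    positivity
  obtain ⟨μ, hμdef⟩ : ∃ μ : ℝ, μ = (1-ε)^2 * (δ * L) := ⟨_, rfl⟩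
  have hμ0 : 0 < μ := by rw [hμdef]; positivity
  have hμε : μ ≤ ε := by
    have h1 : (1-ε)^2 ≤ 1 := by nlinarith
    calc μ = (1-ε)^2 * (δ * L) := hμdef
      _ ≤ 1 * (δ * L) := mul_le_mul_of_nonneg_right h1 hδL0.le
      _ = δ * L := one_mul _
      _ ≤ ε := by linarith
  obtain ⟨r, hrdef⟩ : ∃ r : ℝ, r = Real.exp (-μ) := ⟨_, rfl⟩
  have hr0 : 0 < r := by rw [hrdef]; exact Real.exp_pos _
  have hr1 : r < 1 := by rw [hrdef]; exact Real.exp_lt_one_iff.mpr (by linarith)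
  obtain ⟨k0, hk0def⟩ : ∃ k0 : ℕ, k0 = Nat.ceil (x ^ (1-ε)) := ⟨_, rfl⟩
  have hk0lb : x ^ (1-ε) ≤ (k0:ℝ) := by rw [hk0def]; exact Nat.le_ceil _
  have hk0ge : N ≤ k0 := by
    have : (N:ℝ) ≤ (k0:ℝ) := le_trans hk0N hk0lb
    exact_mod_cast this
  have hk0ub : (k0:ℝ) ≤ x ^ (1-ε) + 1 := by
    rw [hk0def]
    exact (Nat.ceil_lt_add_one (by positivity)).le
  have hxpow1 : (1:ℝ) ≤ x ^ (1-ε) := by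
    calc (1:ℝ) ≤ (N:ℝ) := by exact_mod_cast hN1
      _ ≤ x ^ (1-ε) := hk0N
  have hlogk0 : (1-ε) * L ≤ Real.log k0 := by
    calc (1-ε) * L = Real.log (x ^ (1-ε)) := by rw [Real.log_rpow hx0, hxdef, hLdef]
      _ ≤ Real.log k0 := Real.log_le_log (by positivity) hk0lb
  -- term bound for k ≥ k0
  have hterm : ∀ k, k0 ≤ k → (ell (k + 1) : ℝ) ^ (-δ) ≤ r ^ k := by
    intro k hk
    have hkN : N ≤ k := le_trans hk0ge hk
    have hk1' : (1:ℝ) ≤ (k:ℝ) := by exact_mod_cast le_trans hN1 hkN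
    have hlogk : (1-ε) * L ≤ Real.log k := by
      calc (1-ε) * L ≤ Real.log k0 := hlogk0
        _ ≤ Real.log k := by
            apply Real.log_le_log
            · have : (1:ℕ) ≤ k0 := hN1.trans hk0ge
              exact_mod_cast this
            · exact_mod_cast hk
    have hLk := hNprop k hkN
    have hchain : μ * k ≤ δ * Real.log (ell (k + 1)) := by
      have h1 : (1-ε) * (k * ((1-ε) * L)) ≤ (1-ε) * (k * Real.log k) := by
        apply mul_le_mul_of_nonneg_left _ hε1.le
        exact mul_le_mul_of_nonneg_left hlogk (by positivity)
      have h2 : μ * k = δ * ((1-ε) * (k * ((1-ε) * L))) := by rw [hμdef]; ring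
      rw [h2]
      exact mul_le_mul_of_nonneg_left (le_trans h1 hLk) hδ.le
    rw [term_eq, hrdef, ← Real.exp_nat_mul]
    apply Real.exp_le_exp.mpr
    nlinarith [hchain]
  -- split phi
  have hsplit : phi δ = (∑ k ∈ Finset.range k0, (ell (k + 1) : ℝ) ^ (-δ))
      + ∑' j : ℕ, (ell (j + k0 + 1) : ℝ) ^ (-δ) := by
    rw [phi]
    exact (Summable.sum_add_tsum_nat_add k0 (summable_term hδ)).symm
  have hsum1 : (∑ k ∈ Finset.range k0, (ell (k + 1) : ℝ) ^ (-δ)) ≤ (k0:ℝ) := by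
    have := Finset.sum_le_card_nsmul (Finset.range k0)
      (fun k => (ell (k + 1) : ℝ) ^ (-δ)) 1 (fun k _ => term_le_one hδ k)
    rwa [Finset.card_range, nsmul_eq_mul, mul_one] at this
  have hgeo : Summable (fun j : ℕ => r ^ (j + k0)) := by
    have := (summable_geometric_of_lt_one hr0.le hr1).mul_left (r ^ k0)
    apply this.congr
    intro j
    rw [pow_add, mul_comm]
  have hsum2 : (∑' j : ℕ, (ell (j + k0 + 1) : ℝ) ^ (-δ)) ≤ 1 / (1 - r) := by
    have h1 : (∑' j : ℕ, (ell (j + k0 + 1) : ℝ) ^ (-δ)) ≤ ∑' j : ℕ, r ^ (j + k0) := by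
      have hsummand : Summable (fun j : ℕ => (ell (j + k0 + 1) : ℝ) ^ (-δ)) :=
        (summable_nat_add_iff (f := fun k : ℕ => (ell (k + 1) : ℝ) ^ (-δ)) k0).mpr
          (summable_term hδ)
      apply Summable.tsum_le_tsum _ hsummand hgeo
      intro j
      exact hterm (j + k0) (by omega)
    have h2 : (∑' j : ℕ, r ^ (j + k0)) = r ^ k0 * (1 - r)⁻¹ := by
      rw [← tsum_geometric_of_lt_one hr0.le hr1, ← tsum_mul_left]
      congr 1
      ext j
      rw [pow_add, mul_comm]
    have h3 : r ^ k0 * (1 - r)⁻¹ ≤ 1 / (1 - r) := by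
      calc r ^ k0 * (1 - r)⁻¹ ≤ 1 * (1 - r)⁻¹ :=
            mul_le_mul_of_nonneg_right (pow_le_one₀ hr0.le hr1.le) (by
              have : (0:ℝ) < 1 - r := by linarith
              positivity)
        _ = 1 / (1 - r) := by rw [one_mul, one_div]
    linarith
  -- 1 - r ≥ μ/(1+μ)
  have hrle : r ≤ (1 + μ)⁻¹ := by
    rw [hrdef, Real.exp_neg]
    apply inv_anti₀ (by linarith)
    linarith [Real.add_one_le_exp μ]
  have h1r : μ / (1 + μ) ≤ 1 - r := by
    have : 1 - (1+μ)⁻¹ = μ/(1+μ) := by field_simp; ring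
    linarith [hrle, this]
  have h1r0 : 0 < 1 - r := by linarith
  -- assemble
  have hphi : phi δ ≤ (k0:ℝ) + (1 + μ)/μ := by
    rw [hsplit]
    have : 1/(1-r) ≤ (1+μ)/μ := by
      have hh := (div_le_iff₀ (show (0:ℝ) < 1+μ by linarith)).mp h1r
      rw [div_le_div_iff₀ h1r0 hμ0]
      nlinarith [hh]
    linarith [hsum1, hsum2]
  have hk0δL : (k0:ℝ) * (δ * L) ≤ ε := by
    have e1 : (k0:ℝ) * (δ * L) ≤ (x ^ (1-ε) + 1) * (δ * L) :=
      mul_le_mul_of_nonneg_right hk0ub hδL0.le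
    have e2 : x ^ (1-ε) * δ = (x ^ ε)⁻¹ := by
      have hδx : δ = x⁻¹ := by rw [hxdef, inv_inv]
      rw [hδx, ← Real.rpow_neg_one x, ← Real.rpow_add hx0, ← Real.rpow_neg hx0.le]
      congr 1
      ring
    have e3 : (x ^ (1-ε) + 1) * (δ * L) = L / x ^ ε + δ * L := by
      rw [add_mul, ← mul_assoc, e2, one_mul, div_eq_inv_mul]
    linarith [e1, e3.le, hlogdiv, hδL]
  have hfin : ((1 + μ)/μ) * (δ * L) ≤ (1 + ε)/(1-ε)^2 := by
    have : ((1 + μ)/μ) * (δ * L) = (1 + μ)/(1-ε)^2 := by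
      rw [hμdef]
      field_simp
    rw [this, div_le_div_iff₀ (by positivity) (by positivity)]
    nlinarith [hμε, sq_nonneg (1-ε)]
  have hnum : (1 + ε)/(1-ε)^2 ≤ 1 + 14*ε := by
    have hprod : (0:ℝ) ≤ (1-2*ε)*(10-7*ε) := mul_nonneg (by linarith) (by linarith)
    rw [div_le_iff₀ (show (0:ℝ) < (1-ε)^2 by positivity)]
    nlinarith [mul_nonneg hε.le hprod]
  calc phi δ * (δ * Real.log δ⁻¹) = phi δ * (δ * L) := by rw [hLdef]
    _ ≤ ((k0:ℝ) + (1 + μ)/μ) * (δ * L) := by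
        apply mul_le_mul_of_nonneg_right hphi hδL0.le
        -- need phi nonneg? mul_le_mul_of_nonneg_right : a ≤ b → 0 ≤ c → a*c ≤ b*c ✓
    _ = (k0:ℝ) * (δ * L) + ((1 + μ)/μ) * (δ * L) := by ring
    _ ≤ ε + (1 + ε)/(1-ε)^2 := add_le_add hk0δL hfin
    _ ≤ 1 + 15*ε := by linarith [hnum]

/-- `φ(δ) ~ δ⁻¹/log(1/δ)` as `δ → 0⁺`. -/
theorem phi_asymptotics :
    Filter.Tendsto (fun δ : ℝ => phi δ / (δ⁻¹ / Real.log (1 / δ)))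
      (nhdsWithin 0 (Set.Ioi 0)) (nhds 1) := by
  rw [Metric.tendsto_nhds]
  intro ε' hε'
  have hε : 0 < min (ε'/16) (1/2) := by positivity
  have hε2 : min (ε'/16) (1/2) ≤ 1/2 := min_le_right _ _
  have hε16 : min (ε'/16) (1/2) ≤ ε'/16 := min_le_left _ _
  filter_upwards [main_lower hε hε2, main_upper hε hε2, ev_pos, ev_lt one_pos]
    with δ hlow hup hδ hδ1
  have heq : phi δ / (δ⁻¹ / Real.log (1 / δ)) = phi δ * (δ * Real.log δ⁻¹) := by
    rw [one_div, div_div_eq_mul_div, div_eq_mul_inv, inv_inv]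
    ring
  rw [heq, Real.dist_eq, abs_lt]
  constructor <;> nlinarith [hlow, hup, hε16, hε.le, hε']
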